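/- For distinct primes p and q and every k ∈ {0, 1, ..., (p−1)(q−1)}, the coefficient a_{pq}(k) of z^{φ(pq)−k} in Φ_{pq}(z) equals H_k(1, ζ_p, ζ_p^2, ..., ζ_p^{p−1}, ζ_q, ..., ζ_q^{q−1}), the complete homogeneous symmetric polynomial of degree k evaluated at the non-primitive pq-th roots of unity, and this value lies in {−1, 0, 1}. -/

import Mathlib

open Polynomial

/-- The complete homogeneous symmetric polynomial of degree `r`
evaluated at the entries of a list. -/
noncomputable def hsymmEval : List ℂ → ℕ → ℂ
  | _, 0 => 1
  | [], _ + 1 => 0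
  | x :: xs, r + 1 => x * hsymmEval (x :: xs) r + hsymmEval xs (r + 1)
  termination_by l r => (r, l.length)

/-- The list of the `φ(m)` primitive `m`-th roots of unity. -/
noncomputable def primRoots (m : ℕ) : List ℂ :=
  ((List.range m).filter (fun j => Nat.gcd (j + 1) m = 1)).map
    (fun j => Complex.exp (2 * (Real.pi : ℂ) * Complex.I * (j + 1 : ℕ) / (m : ℂ)))

/-- The list of the non-primitive `m`-th roots of unity. -/
noncomputable def nonPrimRoots (m : ℕ) : List ℂ :=
  ((List.range m).filter (fun j => 1 < Nat.gcd (j + 1) m)).map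
    (fun j => Complex.exp (2 * (Real.pi : ℂ) * Complex.I * (j + 1 : ℕ) / (m : ℂ)))

lemma hsymmEval_zero (L : List ℂ) : hsymmEval L 0 = 1 := by cases L <;> rw [hsymmEval]
lemma hsymmEval_nil_succ (r : ℕ) : hsymmEval [] (r+1) = 0 := by rw [hsymmEval]
lemma hsymmEval_cons (x : ℂ) (xs : List ℂ) (r : ℕ) :
    hsymmEval (x::xs) (r+1) = x * hsymmEval (x::xs) r + hsymmEval xs (r+1) := by rw [hsymmEval]

lemma hsymm_step (x : ℂ) (xs : List ℂ) :
    (1 - PowerSeries.C x * PowerSeries.X) * PowerSeries.mk (hsymmEval (x::xs))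
      = PowerSeries.mk (hsymmEval xs) := by
  ext n
  rw [sub_mul, one_mul, map_sub]
  cases n with
  | zero =>
    simp [hsymmEval_zero, mul_assoc, PowerSeries.coeff_zero_eq_constantCoeff]
  | succ n =>
    rw [mul_assoc, PowerSeries.coeff_mk, PowerSeries.coeff_C_mul,
      PowerSeries.coeff_succ_X_mul, PowerSeries.coeff_mk, PowerSeries.coeff_mk,
      hsymmEval_cons]
    ring

lemma hsymm_inv (L : List ℂ) :
    (L.map (fun x => 1 - PowerSeries.C x * PowerSeries.X)).prod
      * PowerSeries.mk (hsymmEval L) = 1 := by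
  induction L with
  | nil =>
    simp only [List.map_nil, List.prod_nil, one_mul]
    ext n
    cases n with
    | zero => simp [hsymmEval_zero]
    | succ n => simp [hsymmEval_nil_succ, PowerSeries.coeff_one]
  | cons x xs ih =>
    rw [List.map_cons, List.prod_cons, mul_comm (1 - PowerSeries.C x * PowerSeries.X),
      mul_assoc, hsymm_step, ih]

lemma divInd_inv (n : ℕ) (hn : 0 < n) :
    (1 - (PowerSeries.X : PowerSeries ℂ) ^ n)
      * PowerSeries.mk (fun k => if n ∣ k then 1 else 0) = 1 := by
  ext m
  rw [sub_mul, one_mul, map_sub, PowerSeries.coeff_X_pow_mul', PowerSeries.coeff_mk,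
    PowerSeries.coeff_one]
  rcases Nat.eq_zero_or_pos m with rfl | hm
  · simp [hn.ne']
  · have hne : ¬ m = 0 := hm.ne'
    rw [if_neg hne]
    by_cases hle : n ≤ m
    · rw [if_pos hle, PowerSeries.coeff_mk]
      have hiff : n ∣ m ↔ n ∣ m - n := by
        constructor
        · exact fun h => Nat.dvd_sub h dvd_rfl
        · intro h
          have := Nat.dvd_add h (dvd_refl n)
          rwa [Nat.sub_add_cancel hle] at this
      by_cases h : n ∣ m
      · rw [if_pos h, if_pos (hiff.mp h)]; ring
      · rw [if_neg h, if_neg (fun hh => h (hiff.mpr hh))]; ring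
    · rw [if_neg hle, if_neg (fun h => hle (Nat.le_of_dvd hm h))]; ring

lemma reverse_X_pow_sub_one (n : ℕ) (hn : 0 < n) :
    (X ^ n - 1 : ℂ[X]).reverse = 1 - X ^ n := by
  have h1 : (X ^ n - 1 : ℂ[X]) = X ^ n - C 1 := by rw [map_one]
  rw [reverse, h1, natDegree_X_pow_sub_C, reflect_sub, reflect_monomial, ← map_one (C : ℂ →+* ℂ[X]),
    ← mul_one (C (1:ℂ)), ← pow_zero (X : ℂ[X]), reflect_C_mul_X_pow, revAt_le le_rfl,
    revAt_le (Nat.zero_le n), pow_zero, Nat.sub_zero, Nat.sub_self, pow_zero, map_one, one_mul,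
    mul_one]

lemma reverse_X_sub_C' (a : ℂ) :
    (X - C a : ℂ[X]).reverse = 1 - C a * X := by
  rw [reverse, natDegree_X_sub_C, reflect_sub, ← pow_one (X : ℂ[X]), reflect_monomial,
    ← mul_one (C a), ← pow_zero (X : ℂ[X]), reflect_C_mul_X_pow, revAt_le le_rfl,
    revAt_le (Nat.zero_le 1), Nat.sub_self, pow_zero, Nat.sub_zero, pow_one, mul_one]

lemma reverse_prod' {ι : Type*} (s : Finset ι) (f : ι → ℂ[X]) :
    (∏ i ∈ s, f i).reverse = ∏ i ∈ s, (f i).reverse := by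
  induction s using Finset.cons_induction with
  | empty => simp [Polynomial.reverse]
  | cons a s ha ih => rw [Finset.prod_cons, Finset.prod_cons, reverse_mul_of_domain, ih]

lemma prod_one_sub_zeta {n : ℕ} (hn : 0 < n) {ζ : ℂ} (hζ : IsPrimitiveRoot ζ n) :
    ∏ i ∈ Finset.range n, (1 - C (ζ ^ i) * X) = 1 - (X : ℂ[X]) ^ n := by
  have h0 : (X ^ n - 1 : ℂ[X]) = X ^ n - C 1 := by rw [map_one]
  have h := congrArg reverse (h0.symm ▸ X_pow_sub_C_eq_prod hζ hn (one_pow n))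
  rw [reverse_X_pow_sub_one n hn, reverse_prod'] at h
  rw [h]
  exact Finset.prod_congr rfl fun i _ => by rw [mul_one, reverse_X_sub_C']

lemma prod_one_sub_zeta_ps {n : ℕ} (hn : 0 < n) {ζ : ℂ} (hζ : IsPrimitiveRoot ζ n) :
    ∏ i ∈ Finset.range n, (1 - PowerSeries.C (ζ ^ i) * PowerSeries.X)
      = 1 - (PowerSeries.X : PowerSeries ℂ) ^ n := by
  have h := congrArg (Polynomial.coeToPowerSeries.ringHom (R := ℂ)) (prod_one_sub_zeta hn hζ)
  rw [map_prod, map_sub, map_one, map_pow] at h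
  simpa only [Polynomial.coeToPowerSeries.ringHom_apply, Polynomial.coe_sub, Polynomial.coe_mul,
    Polynomial.coe_one, Polynomial.coe_pow, Polynomial.coe_X, Polynomial.coe_C] using h

lemma divisors_pq {p q : ℕ} (hp : p.Prime) (hq : q.Prime) (hpq : p ≠ q) :
    (p * q).divisors = {1, p, q, p * q} := by
  rw [Nat.divisors_mul, hp.divisors, hq.divisors]
  ext d
  simp only [Finset.mem_mul, Finset.mem_insert, Finset.mem_singleton]
  constructor
  · rintro ⟨a, (rfl|rfl), b, (rfl|rfl), rfl⟩ <;> simp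
  · rintro (rfl|rfl|rfl|rfl)
    · exact ⟨1, Or.inl rfl, 1, Or.inl rfl, one_mul 1⟩
    · exact ⟨d, Or.inr rfl, 1, Or.inl rfl, mul_one d⟩
    · exact ⟨1, Or.inl rfl, d, Or.inr rfl, one_mul d⟩
    · exact ⟨p, Or.inr rfl, q, Or.inr rfl, rfl⟩

lemma cyclo_prod_eq {p q : ℕ} (hp : p.Prime) (hq : q.Prime) (hpq : p ≠ q) :
    (cyclotomic (p * q) ℂ) * ((X ^ p - 1) * (X ^ q - 1)) = (X ^ (p * q) - 1) * (X - 1) := by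
  have hp1 : p ≠ 1 := hp.one_lt.ne'
  have hq1 : q ≠ 1 := hq.one_lt.ne'
  have hpq1 : p * q ≠ 1 := by
    intro h; exact hp1 (Nat.eq_one_of_mul_eq_one_right h)
  have hppq : p ≠ p * q := fun h =>
    hq1 (Nat.eq_of_mul_eq_mul_left hp.pos ((mul_one p).trans h)).symm
  have hqpq : q ≠ p * q := fun h =>
    hp1 (Nat.eq_of_mul_eq_mul_right hq.pos ((one_mul q).trans (h.trans (rfl)))).symm
  have m1 : (1:ℕ) ∉ ({p, q, p * q} : Finset ℕ) := by
    simp only [Finset.mem_insert, Finset.mem_singleton]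
    push_neg
    exact ⟨Ne.symm hp1, Ne.symm hq1, Ne.symm hpq1⟩
  have m2 : p ∉ ({q, p * q} : Finset ℕ) := by
    simp only [Finset.mem_insert, Finset.mem_singleton]
    push_neg
    exact ⟨hpq, hppq⟩
  have m3 : q ∉ ({p * q} : Finset ℕ) := by
    simpa using hqpq
  have m4 : (1:ℕ) ∉ ({p} : Finset ℕ) := by simpa using Ne.symm hp1
  have m5 : (1:ℕ) ∉ ({q} : Finset ℕ) := by simpa using Ne.symm hq1
  have hbig : (X ^ (p * q) - 1 : ℂ[X])
      = cyclotomic 1 ℂ * (cyclotomic p ℂ * (cyclotomic q ℂ * cyclotomic (p * q) ℂ)) := by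
    rw [← prod_cyclotomic_eq_X_pow_sub_one (Nat.mul_pos hp.pos hq.pos) ℂ,
      divisors_pq hp hq hpq, Finset.prod_insert m1, Finset.prod_insert m2,
      Finset.prod_insert m3, Finset.prod_singleton]
  have hP : (X ^ p - 1 : ℂ[X]) = cyclotomic 1 ℂ * cyclotomic p ℂ := by
    rw [← prod_cyclotomic_eq_X_pow_sub_one hp.pos ℂ, hp.divisors,
      Finset.prod_insert m4, Finset.prod_singleton]
  have hQ : (X ^ q - 1 : ℂ[X]) = cyclotomic 1 ℂ * cyclotomic q ℂ := by
    rw [← prod_cyclotomic_eq_X_pow_sub_one hq.pos ℂ, hq.divisors,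
      Finset.prod_insert m5, Finset.prod_singleton]
  rw [hbig, hP, hQ, ← cyclotomic_one ℂ]
  ring

lemma rep_unique {p q k : ℕ} (hco : Nat.Coprime p q) (hk : k < p * q)
    {i j i' j' : ℕ} (hij : i + j = k) (hij' : i' + j' = k)
    (h1 : p ∣ i) (h2 : q ∣ j) (h3 : p ∣ i') (h4 : q ∣ j') : i = i' ∧ j = j' := by
  have key : ∀ {a b a' b' : ℕ}, a + b = k → a' + b' = k → p ∣ a → q ∣ b → p ∣ a' → q ∣ b' →
      a ≤ a' → a = a' := by
    intro a b a' b' s1 s2 d1 d2 d3 d4 hle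
    have e1 : p ∣ a' - a := Nat.dvd_sub d3 d1
    have e2 : q ∣ a' - a := by
      have hb : a' - a = b - b' := by omega
      rw [hb]; exact Nat.dvd_sub d2 d4
    have e3 : p * q ∣ a' - a := Nat.Coprime.mul_dvd_of_dvd_of_dvd hco e1 e2
    rcases Nat.eq_zero_or_pos (a' - a) with h0 | h0
    · omega
    · have := Nat.le_of_dvd h0 e3
      omega
  rcases le_total i i' with h | h
  · have := key hij hij' h1 h2 h3 h4 h
    omega
  · have := key hij' hij h3 h4 h1 h2 h
    omega

lemma coeff_mk_ind (p q k : ℕ) :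
    (PowerSeries.coeff k) (PowerSeries.mk (fun m => if p ∣ m then 1 else 0) *
        PowerSeries.mk (fun m => if q ∣ m then 1 else 0))
      = (((Finset.HasAntidiagonal.antidiagonal k).filter (fun x : ℕ × ℕ => p ∣ x.1 ∧ q ∣ x.2)).card : ℂ) := by
  classical
  rw [PowerSeries.coeff_mul, ← Finset.sum_boole]
  refine Finset.sum_congr rfl fun x _ => ?_
  rw [PowerSeries.coeff_mk, PowerSeries.coeff_mk]
  by_cases h1 : p ∣ x.1 <;> by_cases h2 : q ∣ x.2 <;> simp [h1, h2]

lemma card_rep_mem {p q : ℕ} (hco : Nat.Coprime p q) {k : ℕ} (hk : k < p * q) :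
    ((((Finset.HasAntidiagonal.antidiagonal k).filter (fun x : ℕ × ℕ => p ∣ x.1 ∧ q ∣ x.2)).card : ℂ))
      ∈ ({0, 1} : Set ℂ) := by
  classical
  have hle : ((Finset.HasAntidiagonal.antidiagonal k).filter (fun x : ℕ × ℕ => p ∣ x.1 ∧ q ∣ x.2)).card ≤ 1 := by
    rw [Finset.card_le_one]
    intro a ha b hb
    simp only [Finset.mem_filter, Finset.HasAntidiagonal.mem_antidiagonal] at ha hb
    obtain ⟨e1, e2⟩ := rep_unique hco hk ha.1 hb.1 ha.2.1 ha.2.2 hb.2.1 hb.2.2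
    exact Prod.ext e1 e2
  interval_cases h : ((Finset.HasAntidiagonal.antidiagonal k).filter (fun x : ℕ × ℕ => p ∣ x.1 ∧ q ∣ x.2)).card <;>
    simp [h]

lemma one_sub_X_pow_ne_zero {n : ℕ} (hn : 0 < n) :
    (1 - (PowerSeries.X : PowerSeries ℂ) ^ n) ≠ 0 := by
  intro h
  have := congrArg (PowerSeries.constantCoeff) h
  simp [PowerSeries.constantCoeff_X, zero_pow hn.ne'] at this

lemma mul_shuffle {R : Type*} [CommRing R] {a b c d : R} (h : a * b * c = 1) :
    a * (b * d) * c = d := by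
  have h2 : a * (b * d) * c = (a * b * c) * d := by ring
  rw [h2, h, one_mul]

lemma AB_mkH {p q : ℕ} (hp : p.Prime) (hq : q.Prime) :
    (1 - (PowerSeries.X : PowerSeries ℂ) ^ p) * (1 - PowerSeries.X ^ q) *
      PowerSeries.mk (hsymmEval
        (((List.range p).map
            (fun j => Complex.exp (2 * (Real.pi : ℂ) * Complex.I * (j : ℕ) / (p : ℂ)))) ++
          ((List.range (q - 1)).map
            (fun j => Complex.exp (2 * (Real.pi : ℂ) * Complex.I * (j + 1 : ℕ) / (q : ℂ))))))
      = 1 - PowerSeries.X := by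
  have hp0 := hp.pos
  have hq0 := hq.pos
  have hζp := Complex.isPrimitiveRoot_exp p hp0.ne'
  have hζq := Complex.isPrimitiveRoot_exp q hq0.ne'
  have hg1 : ∀ j : ℕ, Complex.exp (2 * (Real.pi : ℂ) * Complex.I * (j : ℕ) / (p : ℂ))
      = Complex.exp (2 * Real.pi * Complex.I / p) ^ j := by
    intro j
    rw [← Complex.exp_nat_mul]
    congr 1
    push_cast
    ring
  have hg2 : ∀ j : ℕ, Complex.exp (2 * (Real.pi : ℂ) * Complex.I * ((j + 1 : ℕ)) / (q : ℂ))
      = Complex.exp (2 * Real.pi * Complex.I / q) ^ (j + 1) := by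
    intro j
    rw [← Complex.exp_nat_mul]
    congr 1
    push_cast
    ring
  have hmap1 : (((List.range p).map
      (fun j => Complex.exp (2 * (Real.pi : ℂ) * Complex.I * (j : ℕ) / (p : ℂ)))).map
        (fun x => 1 - PowerSeries.C x * PowerSeries.X)).prod
      = 1 - (PowerSeries.X : PowerSeries ℂ) ^ p := by
    rw [List.map_map]
    have h0 : ((List.range p).map ((fun x => 1 - PowerSeries.C x * PowerSeries.X) ∘
        (fun j => Complex.exp (2 * (Real.pi : ℂ) * Complex.I * (j : ℕ) / (p : ℂ))))).prod
        = ∏ i ∈ Finset.range p, (1 - PowerSeries.C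
            (Complex.exp (2 * (Real.pi : ℂ) * Complex.I * (i : ℕ) / (p : ℂ))) * PowerSeries.X) :=
      rfl
    rw [h0, ← prod_one_sub_zeta_ps hp0 hζp]
    exact Finset.prod_congr rfl fun i _ => by rw [hg1 i]
  have hmap2 : (((List.range (q - 1)).map
      (fun j => Complex.exp (2 * (Real.pi : ℂ) * Complex.I * ((j + 1 : ℕ)) / (q : ℂ)))).map
        (fun x => 1 - PowerSeries.C x * PowerSeries.X)).prod * (1 - PowerSeries.X)
      = 1 - (PowerSeries.X : PowerSeries ℂ) ^ q := by
    rw [List.map_map]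
    have h0 : ((List.range (q - 1)).map ((fun x => 1 - PowerSeries.C x * PowerSeries.X) ∘
        (fun j => Complex.exp (2 * (Real.pi : ℂ) * Complex.I * ((j + 1 : ℕ)) / (q : ℂ))))).prod
        = ∏ i ∈ Finset.range (q - 1), (1 - PowerSeries.C
            (Complex.exp (2 * (Real.pi : ℂ) * Complex.I * ((i + 1 : ℕ)) / (q : ℂ)))
              * PowerSeries.X) := rfl
    have h1 : (1 - PowerSeries.X : PowerSeries ℂ)
        = 1 - PowerSeries.C ((Complex.exp (2 * Real.pi * Complex.I / q)) ^ (0:ℕ))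
            * PowerSeries.X := by
      simp
    rw [h0, Finset.prod_congr rfl (fun i _ => by rw [hg2 i]), h1,
      ← Finset.prod_range_succ'
        (fun i => 1 - PowerSeries.C ((Complex.exp (2 * Real.pi * Complex.I / q)) ^ i)
          * PowerSeries.X) (q - 1),
      Nat.sub_add_cancel hq0]
    exact prod_one_sub_zeta_ps hq0 hζq
  have hfull := hsymm_inv (((List.range p).map
      (fun j => Complex.exp (2 * (Real.pi : ℂ) * Complex.I * (j : ℕ) / (p : ℂ)))) ++
    ((List.range (q - 1)).map
      (fun j => Complex.exp (2 * (Real.pi : ℂ) * Complex.I * (j + 1 : ℕ) / (q : ℂ)))))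
  rw [List.map_append, List.prod_append] at hfull
  rw [← hmap1, ← hmap2]
  exact mul_shuffle hfull

lemma key_identity {p q : ℕ} (hp : p.Prime) (hq : q.Prime) (hpq : p ≠ q) :
    (((cyclotomic (p * q) ℂ).reverse : ℂ[X]) : PowerSeries ℂ)
      = (1 - PowerSeries.X ^ (p * q)) * PowerSeries.mk (hsymmEval
        (((List.range p).map
            (fun j => Complex.exp (2 * (Real.pi : ℂ) * Complex.I * (j : ℕ) / (p : ℂ)))) ++
          ((List.range (q - 1)).map
            (fun j => Complex.exp (2 * (Real.pi : ℂ) * Complex.I * (j + 1 : ℕ) / (q : ℂ)))))) := by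
  have hrevpoly := congrArg Polynomial.reverse (cyclo_prod_eq hp hq hpq)
  have hX1 : (X - 1 : ℂ[X]) = X ^ 1 - 1 := by rw [pow_one]
  rw [reverse_mul_of_domain, reverse_mul_of_domain, reverse_mul_of_domain,
    reverse_X_pow_sub_one p hp.pos, reverse_X_pow_sub_one q hq.pos,
    reverse_X_pow_sub_one (p * q) (Nat.mul_pos hp.pos hq.pos), hX1,
    reverse_X_pow_sub_one 1 one_pos, pow_one] at hrevpoly
  have hps := congrArg (Polynomial.coeToPowerSeries.ringHom (R := ℂ)) hrevpoly
  simp only [map_mul, map_sub, map_one, map_pow, Polynomial.coeToPowerSeries.ringHom_apply,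
    Polynomial.coe_X] at hps
  have hAB := AB_mkH hp hq
  have hABne : (1 - (PowerSeries.X : PowerSeries ℂ) ^ p) * (1 - PowerSeries.X ^ q) ≠ 0 :=
    mul_ne_zero (one_sub_X_pow_ne_zero hp.pos) (one_sub_X_pow_ne_zero hq.pos)
  apply mul_right_cancel₀ hABne
  rw [hps]
  linear_combination (-(1 - (PowerSeries.X : PowerSeries ℂ) ^ (p * q))) * hAB

theorem binary_cyclotomic_coeff (p q : ℕ) (hp : p.Prime) (hq : q.Prime) (hpq : p ≠ q) :
    ∀ k ≤ (p - 1) * (q - 1),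
      (Polynomial.cyclotomic (p * q) ℂ).coeff ((p - 1) * (q - 1) - k) =
          hsymmEval
            (((List.range p).map
                (fun j => Complex.exp (2 * (Real.pi : ℂ) * Complex.I * (j : ℕ) / (p : ℂ)))) ++
              ((List.range (q - 1)).map
                (fun j => Complex.exp (2 * (Real.pi : ℂ) * Complex.I * (j + 1 : ℕ) / (q : ℂ)))))
            k ∧
        (Polynomial.cyclotomic (p * q) ℂ).coeff ((p - 1) * (q - 1) - k) ∈
          ({-1, 0, 1} : Set ℂ) := by
  intro k hk
  have hco : Nat.Coprime p q := (Nat.coprime_primes hp hq).mpr hpq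
  have hφlt : (p - 1) * (q - 1) < p * q := by
    have h1 : (p - 1) * (q - 1) ≤ p * (q - 1) := Nat.mul_le_mul_right _ (Nat.sub_le p 1)
    have h2 : p * (q - 1) < p * q :=
      mul_lt_mul_of_pos_left (Nat.sub_lt hq.pos one_pos) hp.pos
    exact lt_of_le_of_lt h1 h2
  have hklt : k < p * q := lt_of_le_of_lt hk hφlt
  have hdeg : (cyclotomic (p * q) ℂ).natDegree = (p - 1) * (q - 1) := by
    rw [natDegree_cyclotomic, Nat.totient_mul hco, Nat.totient_prime hp, Nat.totient_prime hq]
  have hcoeff := congrArg (PowerSeries.coeff k) (key_identity hp hq hpq)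
  rw [Polynomial.coeff_coe, Polynomial.coeff_reverse, hdeg, revAt_le hk, sub_mul, one_mul,
    map_sub, PowerSeries.coeff_X_pow_mul', if_neg (not_le.mpr hklt), sub_zero,
    PowerSeries.coeff_mk] at hcoeff
  refine ⟨hcoeff, ?_⟩
  rw [hcoeff]
  -- membership
  have hABmk := AB_mkH hp hq
  have hip := divInd_inv p hp.pos
  have hiq := divInd_inv q hq.pos
  have hABne : (1 - (PowerSeries.X : PowerSeries ℂ) ^ p) * (1 - PowerSeries.X ^ q) ≠ 0 :=
    mul_ne_zero (one_sub_X_pow_ne_zero hp.pos) (one_sub_X_pow_ne_zero hq.pos)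
  have hmkH : PowerSeries.mk (hsymmEval
        (((List.range p).map
            (fun j => Complex.exp (2 * (Real.pi : ℂ) * Complex.I * (j : ℕ) / (p : ℂ)))) ++
          ((List.range (q - 1)).map
            (fun j => Complex.exp (2 * (Real.pi : ℂ) * Complex.I * (j + 1 : ℕ) / (q : ℂ))))))
      = (1 - PowerSeries.X) * (PowerSeries.mk (fun m => if p ∣ m then 1 else 0)
          * PowerSeries.mk (fun m => if q ∣ m then 1 else 0)) := by
    apply mul_left_cancel₀ hABne
    linear_combination hABmk
      - (1 - PowerSeries.X) * ((1 - PowerSeries.X ^ q)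
          * PowerSeries.mk (fun m => if q ∣ m then (1:ℂ) else 0)) * hip
      - (1 - PowerSeries.X) * hiq
  have hc := congrArg (PowerSeries.coeff k) hmkH
  rw [PowerSeries.coeff_mk, sub_mul, one_mul, map_sub] at hc
  rcases Nat.eq_zero_or_pos k with rfl | hk0
  · have hz : (PowerSeries.coeff 0) (PowerSeries.X *
        (PowerSeries.mk (fun m => if p ∣ m then (1:ℂ) else 0)
          * PowerSeries.mk (fun m => if q ∣ m then (1:ℂ) else 0))) = 0 := by
      simp
    rw [hz, sub_zero, coeff_mk_ind] at hc
    rw [hc]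
    have := card_rep_mem hco hklt
    simp only [Set.mem_insert_iff, Set.mem_singleton_iff] at this ⊢
    tauto
  · obtain ⟨k', rfl⟩ : ∃ k', k = k' + 1 := ⟨k - 1, by omega⟩
    rw [PowerSeries.coeff_succ_X_mul, coeff_mk_ind, coeff_mk_ind] at hc
    have m1 := card_rep_mem hco hklt
    have m2 := card_rep_mem hco (lt_trans (Nat.lt_succ_self k') hklt)
    rw [hc]
    simp only [Set.mem_insert_iff, Set.mem_singleton_iff] at m1 m2 ⊢
    rcases m1 with h1 | h1 <;> rcases m2 with h2 | h2 <;> rw [h1, h2] <;> norm_num
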